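/- Let σ, ρ > 0 and N ≥ 1, and let b_k = N!/(k!((N-k)/2)!) · ((ρ+σ)/(2σ(2ρ+σ)))^{(N-k)/2} if N-k is even and b_k = 0 if N-k is odd, for k = 0,…,N-1. Then for every λ ∈ ℂ, λ^N + Σ_{k=0}^{N-1} b_k λ^k = (-i √((ρ+σ)/(2σ(2ρ+σ))))^N · H_N( i √(σ(2ρ+σ)/(2(ρ+σ))) · λ ). -/

import Mathlib

open Real MeasureTheory Finset Nat

/-- Physicist's Hermite polynomial via the Rodrigues formula, extended to complex
arguments (the Rodrigues formula applied to the entire function `e^{-z²}`). -/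
noncomputable def hermiteHC (n : ℕ) (z : ℂ) : ℂ :=
  (-1 : ℂ) ^ n * Complex.exp (z ^ 2) * iteratedDeriv n (fun w => Complex.exp (-w ^ 2)) z

/-- The explicit coefficients `b_k`. -/
noncomputable def bcoef (σ ρ : ℝ) (N k : ℕ) : ℝ :=
  if (N - k) % 2 = 0 then
    (N ! : ℝ) / ((k ! : ℝ) * (((N - k) / 2)! : ℝ)) *
      ((ρ + σ) / (2 * σ * (2 * ρ + σ))) ^ ((N - k) / 2)
  else 0

namespace StmtAux

open Polynomial

/-- The physicists' Hermite polynomials, over ℤ. -/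
noncomputable def myH : ℕ → Polynomial ℤ
  | 0 => 1
  | n + 1 => C 2 * (X * myH n) - derivative (myH n)

theorem myH_succ (n : ℕ) : myH (n + 1) = C 2 * (X * myH n) - derivative (myH n) := by
  rw [myH]

theorem coeff_myH_succ_zero (n : ℕ) : coeff (myH (n + 1)) 0 = -coeff (myH n) 1 := by
  simp [myH_succ, coeff_derivative, mul_coeff_zero]

theorem coeff_myH_succ_succ (n k : ℕ) : coeff (myH (n + 1)) (k + 1) =
    2 * coeff (myH n) k - (k + 2) * coeff (myH n) (k + 2) := by
  rw [myH_succ, coeff_sub, coeff_C_mul, coeff_X_mul, coeff_derivative, mul_comm]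
  push_cast
  ring

theorem coeff_myH_of_lt {n k : ℕ} (hnk : n < k) : coeff (myH n) k = 0 := by
  obtain ⟨k, rfl⟩ := Nat.exists_eq_add_of_lt hnk
  clear hnk
  induction n generalizing k with
  | zero => exact coeff_C
  | succ n ih =>
    have : n + k + 1 + 2 = n + (k + 2) + 1 := by ring
    rw [coeff_myH_succ_succ, add_right_comm, this, ih k, ih (k + 2), mul_zero, mul_zero,
      sub_zero]

theorem coeff_myH_self (n : ℕ) : coeff (myH n) n = 2 ^ n := by
  induction n with
  | zero => exact coeff_C
  | succ n ih =>
    rw [coeff_myH_succ_succ, ih, coeff_myH_of_lt, mul_zero, sub_zero, pow_succ]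
    · ring
    · omega

theorem natDegree_myH_le (n : ℕ) : (myH n).natDegree ≤ n :=
  Polynomial.natDegree_le_iff_coeff_eq_zero.mpr fun _ h => coeff_myH_of_lt h

theorem coeff_myH_of_odd_add {n k : ℕ} (hnk : Odd (n + k)) : coeff (myH n) k = 0 := by
  induction n generalizing k with
  | zero =>
    rw [zero_add k] at hnk
    exact coeff_myH_of_lt hnk.pos
  | succ n ih =>
    cases k with
    | zero =>
      rw [Nat.succ_add_eq_add_succ] at hnk
      rw [coeff_myH_succ_zero, ih hnk, neg_zero]
    | succ k =>
      rw [coeff_myH_succ_succ, ih, ih, mul_zero, mul_zero, sub_zero]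
      · rwa [Nat.succ_add_eq_add_succ] at hnk
      · rw [(by rw [Nat.succ_add, Nat.add_succ] : n.succ + k.succ = n + k + 2)] at hnk
        exact (Nat.odd_add.mp hnk).mpr even_two

/-- relation with the probabilists' Hermite polynomials. -/
theorem coeff_myH_explicit :
    ∀ n k : ℕ, coeff (myH (2 * n + k)) k = 2 ^ (n + k) * coeff (hermite (2 * n + k)) k
  | 0, k => by simp [coeff_myH_self, coeff_hermite_self]
  | n + 1, 0 => by
    have h1 : 2 * (n + 1) + 0 = 2 * n + 1 + 1 := by ring
    have h2 : 2 * n + 1 = 2 * n + 1 := rfl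
    rw [h1, coeff_myH_succ_zero, coeff_hermite_succ_zero,
      coeff_myH_explicit n 1]
    ring
  | n + 1, k + 1 => by
    have h1 : 2 * (n + 1) + (k + 1) = (2 * n + k + 2) + 1 := by ring
    rw [h1, coeff_myH_succ_succ, coeff_hermite_succ_succ]
    have h2 : 2 * n + k + 2 = 2 * (n + 1) + k := by ring
    have h3 : 2 * n + k + 2 = 2 * n + (k + 2) := by ring
    have e1 : coeff (myH (2 * n + k + 2)) k
        = 2 ^ (n + 1 + k) * coeff (hermite (2 * n + k + 2)) k := by
      rw [h2, coeff_myH_explicit (n + 1) k]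
    have e2 : coeff (myH (2 * n + k + 2)) (k + 2)
        = 2 ^ (n + (k + 2)) * coeff (hermite (2 * n + k + 2)) (k + 2) := by
      rw [h3, coeff_myH_explicit n (k + 2)]
    rw [e1, e2]
    ring

/-- The complexified physicists' Hermite polynomial. -/
noncomputable def myHC (n : ℕ) : Polynomial ℂ := (myH n).map (Int.castRingHom ℂ)

theorem natDegree_myHC_le (n : ℕ) : (myHC n).natDegree ≤ n :=
  le_trans natDegree_map_le (natDegree_myH_le n)

theorem rodrigues (n : ℕ) :
    ∀ z : ℂ, iteratedDeriv n (fun w => Complex.exp (-w ^ 2)) z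
      = (-1 : ℂ) ^ n * (myHC n).eval z * Complex.exp (-z ^ 2) := by
  induction n with
  | zero =>
    intro z
    simp [myHC, myH]
  | succ n ih =>
    intro z
    rw [iteratedDeriv_succ, funext ih]
    have hexp : HasDerivAt (fun w : ℂ => Complex.exp (-w ^ 2))
        (Complex.exp (-z ^ 2) * -(2 * z)) z := by
      have h1 : HasDerivAt (fun w : ℂ => -w ^ 2) (-(2 * z)) z := by
        simpa using (hasDerivAt_pow 2 z).fun_neg
      exact h1.cexp
    have hP : HasDerivAt (fun w : ℂ => (-1 : ℂ) ^ n * (myHC n).eval w)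
        ((-1 : ℂ) ^ n * (derivative (myHC n)).eval z) z :=
      ((myHC n).hasDerivAt z).const_mul _
    have htot := hP.fun_mul hexp
    rw [htot.deriv]
    have hev : (myHC (n + 1)).eval z
        = 2 * z * (myHC n).eval z - (derivative (myHC n)).eval z := by
      simp only [myHC, myH_succ, Polynomial.map_sub, Polynomial.map_mul, Polynomial.map_C,
        Polynomial.map_X, derivative_map, eval_sub, eval_mul, eval_C, eval_X]
      simp only [eq_intCast]
      push_cast
      ring
    rw [hev]
    ring

theorem hermiteHC_eq_eval (n : ℕ) (z : ℂ) : hermiteHC n z = (myHC n).eval z := by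
  rw [hermiteHC, rodrigues n z]
  have h1 : z ^ 2 + -z ^ 2 = 0 := by ring
  have h2 : ((-1 : ℂ) ^ n) * ((-1 : ℂ) ^ n) = 1 := by
    rw [← pow_add]
    exact Even.neg_one_pow ⟨n, by ring⟩
  calc (-1 : ℂ) ^ n * Complex.exp (z ^ 2) *
        ((-1 : ℂ) ^ n * (myHC n).eval z * Complex.exp (-z ^ 2))
      = ((-1 : ℂ) ^ n * (-1 : ℂ) ^ n) * (myHC n).eval z
          * (Complex.exp (z ^ 2) * Complex.exp (-z ^ 2)) := by ring
    _ = (myHC n).eval z := by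
        rw [h2, ← Complex.exp_add, h1, Complex.exp_zero]; ring

theorem two_mul_factorial (n : ℕ) : (2 * n)! = 2 ^ n * n ! * (2 * n - 1)‼ := by
  induction n with
  | zero => rfl
  | succ n ih =>
    rcases Nat.eq_zero_or_pos n with rfl | hn
    · decide
    · have h2 : 2 * (n + 1) - 1 = (2 * n - 1) + 2 := by omega
      have h1 : 2 * (n + 1) = (2 * n + 1) + 1 := by ring
      rw [h2, Nat.doubleFactorial_add_two, h1, Nat.factorial_succ, Nat.factorial_succ (2 * n),
        ih, Nat.factorial_succ n]
      have h4 : 2 * n - 1 + 2 = 2 * n + 1 := by omega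
      rw [h4]
      ring

/-- Key algebraic identity in ℂ. -/
theorem keyB (n k : ℕ) (cr cs r lam d : ℂ) (hcr : cr ^ 2 = r) (h1 : 2 * (cr * cs) = 1) :
    (-Complex.I * cr) ^ (2 * n + k) * ((-1 : ℂ) ^ n * 2 ^ (n + k) * d
      * (Complex.I * cs * lam) ^ k) = d * (2 * r) ^ n * lam ^ k := by
  have e1 : (-Complex.I * cr) * (Complex.I * cs) = cr * cs := by
    linear_combination (-(cr * cs)) * Complex.I_sq
  have e2 : (-Complex.I * cr) ^ 2 = -r := by
    linear_combination cr ^ 2 * Complex.I_sq - hcr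
  have e3 : (-Complex.I * cr) ^ k * (Complex.I * cs) ^ k = (cr * cs) ^ k := by
    rw [← mul_pow, e1]
  have e4 : (2 : ℂ) ^ k * (cr * cs) ^ k = 1 := by
    rw [← mul_pow, h1, one_pow]
  have e5 : (-r) ^ n * (-1 : ℂ) ^ n = r ^ n := by
    rw [← mul_pow]; simp
  calc (-Complex.I * cr) ^ (2 * n + k) * ((-1 : ℂ) ^ n * 2 ^ (n + k) * d
        * (Complex.I * cs * lam) ^ k)
      = ((-Complex.I * cr) ^ 2) ^ n * (-1 : ℂ) ^ n
          * ((2 : ℂ) ^ k * ((-Complex.I * cr) ^ k * (Complex.I * cs) ^ k))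
          * ((2 : ℂ) ^ n * d * lam ^ k) := by
        rw [pow_add, pow_mul, pow_add, mul_pow Complex.I cs, mul_pow (Complex.I * cs) lam]
        ring
    _ = ((-r) ^ n * (-1 : ℂ) ^ n) * ((2 : ℂ) ^ k * (cr * cs) ^ k)
          * ((2 : ℂ) ^ n * d * lam ^ k) := by rw [e2, e3]
    _ = r ^ n * ((2 : ℂ) ^ n * d * lam ^ k) := by rw [e4, e5, mul_one]
    _ = d * (2 * r) ^ n * lam ^ k := by ring

end StmtAux

/-- the characteristic polynomial with coefficients `b_k` is a weighted
scaled Hermite polynomial. -/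
theorem stmt1 (σ ρ : ℝ) (hσ : 0 < σ) (hρ : 0 < ρ) (N : ℕ) (hN : 1 ≤ N) :
    ∀ lam : ℂ,
      lam ^ N + ∑ k ∈ Finset.range N, (bcoef σ ρ N k : ℂ) * lam ^ k
        = (-Complex.I * (Real.sqrt ((ρ + σ) / (2 * σ * (2 * ρ + σ))) : ℂ)) ^ N *
            hermiteHC N
              (Complex.I * (Real.sqrt (σ * (2 * ρ + σ) / (2 * (ρ + σ))) : ℂ) * lam) := by
  intro lam
  open StmtAux Polynomial in
  set r : ℝ := (ρ + σ) / (2 * σ * (2 * ρ + σ)) with hr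
  set s : ℝ := σ * (2 * ρ + σ) / (2 * (ρ + σ)) with hs
  have hrpos : 0 < r := by
    apply _root_.div_pos <;> positivity
  have hspos : 0 < s := by
    apply _root_.div_pos <;> positivity
  have hcr2 : ((Real.sqrt r : ℂ)) ^ 2 = (r : ℂ) := by
    rw [← Complex.ofReal_pow, Real.sq_sqrt hrpos.le]
  have hprod : 2 * ((Real.sqrt r : ℂ) * (Real.sqrt s : ℂ)) = 1 := by
    have hrs : r * s = 1 / 4 := by
      rw [hr, hs]
      field_simp
      ring
    have hsq : Real.sqrt r * Real.sqrt s = 1 / 2 := by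
      rw [← Real.sqrt_mul hrpos.le, hrs]
      rw [show (1 : ℝ) / 4 = (1 / 2 : ℝ) ^ 2 by norm_num, Real.sqrt_sq (by norm_num)]
    have h2 : (2 : ℝ) * (Real.sqrt r * Real.sqrt s) = 1 := by rw [hsq]; norm_num
    exact_mod_cast h2
  clear_value r s
  -- Rewrite RHS via the polynomial evaluation
  rw [hermiteHC_eq_eval]
  have hdeg : (myHC N).natDegree < N + 1 := Nat.lt_succ_of_le (natDegree_myHC_le N)
  rw [Polynomial.eval_eq_sum_range' hdeg, Finset.mul_sum]
  -- Rewrite LHS as a sum over range (N+1)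
  have hbN : bcoef σ ρ N N = 1 := by
    have h0 : (N ! : ℝ) ≠ 0 := by exact_mod_cast Nat.factorial_ne_zero N
    rw [bcoef, Nat.sub_self]
    simp [h0]
  have hlhs : lam ^ N + ∑ k ∈ Finset.range N, (bcoef σ ρ N k : ℂ) * lam ^ k
      = ∑ k ∈ Finset.range (N + 1), (bcoef σ ρ N k : ℂ) * lam ^ k := by
    rw [Finset.sum_range_succ, hbN]
    push_cast
    ring
  rw [hlhs]
  apply Finset.sum_congr rfl
  intro k hk
  have hkN : k ≤ N := by
    rw [Finset.mem_range] at hk; omega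
  rcases Nat.even_or_odd (N - k) with he | ho
  · -- even case
    obtain ⟨n, hn⟩ := he
    have hNeq : N = 2 * n + k := by omega
    have hcoeff : (myHC N).coeff k = ((2 : ℤ) ^ (n + k)
        * ((-1 : ℤ) ^ n * (2 * n - 1)‼ * Nat.choose (2 * n + k) k) : ℤ) := by
      rw [myHC, Polynomial.coeff_map, hNeq, coeff_myH_explicit, coeff_hermite_explicit]
      norm_cast
    have hnat : N ! = Nat.choose N k * k ! * (2 ^ n * n ! * (2 * n - 1)‼) := by
      rw [← two_mul_factorial, show (2 * n : ℕ) = N - k by omega]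
      exact (Nat.choose_mul_factorial_mul_factorial hkN).symm
    have hb : bcoef σ ρ N k = (Nat.choose N k : ℝ) * (2 * n - 1)‼ * (2 * r) ^ n := by
      rw [bcoef, if_pos (by omega)]
      have hdiv : (N - k) / 2 = n := by omega
      rw [hdiv, ← hr]
      have hk0 : (k ! : ℝ) ≠ 0 := by exact_mod_cast Nat.factorial_ne_zero k
      have hn0 : (n ! : ℝ) ≠ 0 := by exact_mod_cast Nat.factorial_ne_zero n
      have hquot : (N ! : ℝ) / (k ! * n !)
          = (Nat.choose N k : ℝ) * (2 * n - 1)‼ * 2 ^ n := by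
        rw [show ((N)! : ℝ) = ((Nat.choose N k * k ! * (2 ^ n * n ! * (2 * n - 1)‼) : ℕ) : ℝ) by
          exact_mod_cast congrArg (Nat.cast (R := ℝ)) hnat]
        push_cast
        field_simp
      rw [mul_pow]
      linear_combination r ^ n * hquot
    have hkey := StmtAux.keyB n k ((Real.sqrt r : ℝ) : ℂ) ((Real.sqrt s : ℝ) : ℂ) ((r : ℝ) : ℂ)
      lam ((Nat.choose (2 * n + k) k : ℂ) * (((2 * n - 1)‼ : ℕ) : ℂ)) hcr2 hprod
    rw [hcoeff, hb, hNeq]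
    push_cast
    push_cast at hkey
    linear_combination -hkey
  · -- odd case
    have hodd : Odd (N + k) := by
      rcases ho with ⟨m, hm⟩
      exact ⟨m + k, by omega⟩
    have hb0 : bcoef σ ρ N k = 0 := by
      rw [bcoef, if_neg]
      rcases ho with ⟨m, hm⟩
      omega
    have hc0 : (myHC N).coeff k = 0 := by
      rw [myHC, Polynomial.coeff_map, coeff_myH_of_odd_add hodd]
      simp
    rw [hb0, hc0]
    simp
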